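/- The capacity with no side information is upper bounded by the capacity with causal transmitter side information, which is upper bounded by the capacity with side information at both transmitter and receiver: C_Sm(min_i a_i) ≤ C_Sh ≤ Σᵢ pᵢ·C_Sm(aᵢ). -/

import Mathlib

open MeasureTheory Real Set

/-- The standard Gaussian density. -/
noncomputable def φ (x : ℝ) : ℝ := (Real.sqrt (2 * π))⁻¹ * Real.exp (-x ^ 2 / 2)

/-- Mutual information of an input measure `μ` on a type `α` through the channel with
conditional output density `g y t`. -/
noncomputable def MI {α : Type*} [MeasurableSpace α] (μ : Measure α) (g : ℝ → α → ℝ) : ℝ :=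
  ∫ t, (∫ y : ℝ, g y t * Real.log (g y t / ∫ s, g y s ∂μ)) ∂μ

/-- Smith's amplitude-constrained AWGN capacity under amplitude constraint `a`. -/
noncomputable def CSm (a : ℝ) : ℝ :=
  sSup {x : ℝ | ∃ F : Measure ℝ, IsProbabilityMeasure F ∧ F (Icc (-a) a) = 1 ∧
    x = MI F (fun y t => φ (y - t))}

lemma sqrt2pi_pos : 0 < Real.sqrt (2 * π) := Real.sqrt_pos.2 (by positivity)

lemma φ_pos (x : ℝ) : 0 < φ x := by
  unfold φ; positivity

lemma φ_cont : Continuous φ := by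
  unfold φ; fun_prop

lemma φ_le (x : ℝ) : φ x ≤ (Real.sqrt (2 * π))⁻¹ := by
  unfold φ
  nth_rewrite 2 [show (Real.sqrt (2 * π))⁻¹ = (Real.sqrt (2 * π))⁻¹ * 1 by ring]
  refine mul_le_mul_of_nonneg_left ?_ (by positivity)
  rw [show (1:ℝ) = Real.exp 0 by simp]
  exact Real.exp_le_exp.2 (by nlinarith [sq_nonneg x])

lemma integral_φ : ∫ y : ℝ, φ y = 1 := by
  have h : ∀ y : ℝ, φ y = (Real.sqrt (2 * π))⁻¹ * Real.exp (-(1/2) * y ^ 2) := by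
    intro y; unfold φ; ring_nf
  simp_rw [h]
  rw [integral_const_mul, integral_gaussian]
  rw [show π / (1/2) = 2 * π by ring]
  field_simp

lemma integrable_φ : Integrable φ := by
  have : Integrable (fun y : ℝ => (Real.sqrt (2 * π))⁻¹ * Real.exp (-(1/2) * y ^ 2)) :=
    (integrable_exp_neg_mul_sq (by norm_num)).const_mul _
  refine this.congr (Filter.Eventually.of_forall fun y => ?_)
  unfold φ; ring_nf

lemma integral_φ_shift (c : ℝ) : ∫ y : ℝ, φ (y - c) = 1 := by
  rw [integral_sub_right_eq_self φ c]; exact integral_φ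

lemma integrable_φ_shift (c : ℝ) : Integrable (fun y : ℝ => φ (y - c)) := by
  exact integrable_φ.comp_sub_right c

lemma log_sum_ineq {ι : Type*} (s : Finset ι) (a b : ι → ℝ)
    (ha : ∀ i ∈ s, 0 < a i) (hb : ∀ i ∈ s, 0 < b i) :
    (∑ i ∈ s, a i) * Real.log ((∑ i ∈ s, a i) / (∑ i ∈ s, b i)) ≤
      ∑ i ∈ s, a i * Real.log (a i / b i) := by
  rcases s.eq_empty_or_nonempty with rfl | hne
  · simp
  set Sa := ∑ i ∈ s, a i with hSa
  set Sb := ∑ i ∈ s, b i with hSb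
  have hSa0 : 0 < Sa := Finset.sum_pos ha hne
  have hSb0 : 0 < Sb := Finset.sum_pos hb hne
  have key : ∀ i ∈ s, a i - b i * (Sa / Sb) ≤ a i * (Real.log (a i / b i) - Real.log (Sa / Sb)) := by
    intro i hi
    have hai := ha i hi
    have hbi := hb i hi
    have hx : (0:ℝ) < (a i / b i) / (Sa / Sb) := by positivity
    have hlog : 1 - ((a i / b i) / (Sa / Sb))⁻¹ ≤ Real.log ((a i / b i) / (Sa / Sb)) :=
      Real.one_sub_inv_le_log_of_pos hx
    rw [Real.log_div (by positivity) (by positivity)] at hlog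
    have h2 : a i * (1 - ((a i / b i) / (Sa / Sb))⁻¹) ≤
        a i * (Real.log (a i / b i) - Real.log (Sa / Sb)) :=
      mul_le_mul_of_nonneg_left hlog hai.le
    have h3 : a i * (1 - ((a i / b i) / (Sa / Sb))⁻¹) = a i - b i * (Sa / Sb) := by
      field_simp
    linarith
  have hsum : Sa - Sb * (Sa / Sb) ≤
      ∑ i ∈ s, a i * (Real.log (a i / b i) - Real.log (Sa / Sb)) := by
    have := Finset.sum_le_sum key
    rw [Finset.sum_sub_distrib, ← Finset.sum_mul] at this
    exact this
  have hz : Sa - Sb * (Sa / Sb) = 0 := by field_simp; simp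
  have hexp : ∑ i ∈ s, a i * (Real.log (a i / b i) - Real.log (Sa / Sb)) =
      (∑ i ∈ s, a i * Real.log (a i / b i)) - Sa * Real.log (Sa / Sb) := by
    simp_rw [mul_sub]
    rw [Finset.sum_sub_distrib, ← Finset.sum_mul]
  rw [hz] at hsum
  rw [hexp] at hsum
  linarith

/-- Output density of a measure on ℝ through the AWGN channel. -/
noncomputable def Qm (ν : Measure ℝ) (y : ℝ) : ℝ := ∫ s, φ (y - s) ∂ν

lemma Qm_stronglyMeasurable (ν : Measure ℝ) [SFinite ν] : StronglyMeasurable (Qm ν) := by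
  have h : StronglyMeasurable (fun z : ℝ × ℝ => φ (z.1 - z.2)) :=
    (φ_cont.comp (continuous_fst.sub continuous_snd)).stronglyMeasurable
  exact h.integral_prod_right'

lemma ae_mem_of_eq_one {α : Type*} [MeasurableSpace α] (ν : Measure α) [IsProbabilityMeasure ν]
    {S : Set α} (hS : MeasurableSet S) (h1 : ν S = 1) : ∀ᵐ t ∂ν, t ∈ S := by
  rw [ae_iff]
  have : ν Sᶜ = ν Set.univ - ν S := measure_compl hS (by simp [h1])
  simp only [measure_univ, h1, tsub_self] at this
  exact this

lemma Qm_lb (ν : Measure ℝ) [IsProbabilityMeasure ν] {a : ℝ}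
    (hsupp : ν (Icc (-a) a) = 1) (y : ℝ) :
    (Real.sqrt (2 * π))⁻¹ * Real.exp (-a ^ 2) * Real.exp (-y ^ 2) ≤ Qm ν y := by
  have hmem : ∀ᵐ s ∂ν, s ∈ Icc (-a) a := ae_mem_of_eq_one ν measurableSet_Icc hsupp
  have hptw : ∀ᵐ s ∂ν, (Real.sqrt (2 * π))⁻¹ * Real.exp (-a ^ 2) * Real.exp (-y ^ 2) ≤ φ (y - s) := by
    filter_upwards [hmem] with s hs
    have hs2 : s ^ 2 ≤ a ^ 2 := by
      rcases hs with ⟨h1, h2⟩; nlinarith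
    unfold φ
    rw [mul_assoc, ← Real.exp_add]
    refine mul_le_mul_of_nonneg_left (Real.exp_le_exp.2 ?_) (by positivity)
    nlinarith [sq_nonneg (y + s)]
  have hint : Integrable (fun s => φ (y - s)) ν := by
    refine Integrable.mono' (integrable_const ((Real.sqrt (2 * π))⁻¹)) ?_ ?_
    · exact (φ_cont.comp (continuous_const.sub continuous_id)).aestronglyMeasurable
    · filter_upwards with s
      rw [Real.norm_eq_abs, abs_of_pos (φ_pos _)]
      exact φ_le _
  calc (Real.sqrt (2 * π))⁻¹ * Real.exp (-a ^ 2) * Real.exp (-y ^ 2)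
      = ∫ _ : ℝ, (Real.sqrt (2 * π))⁻¹ * Real.exp (-a ^ 2) * Real.exp (-y ^ 2) ∂ν := by
        simp
    _ ≤ ∫ s, φ (y - s) ∂ν := integral_mono_ae (integrable_const _) hint hptw

lemma Qm_pos (ν : Measure ℝ) [IsProbabilityMeasure ν] {a : ℝ}
    (hsupp : ν (Icc (-a) a) = 1) (y : ℝ) : 0 < Qm ν y :=
  lt_of_lt_of_le (by positivity) (Qm_lb ν hsupp y)

lemma Qm_integrable (ν : Measure ℝ) [IsProbabilityMeasure ν] :
    Integrable (Qm ν) volume ∧ ∫ y, Qm ν y = 1 := by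
  have hφm : Measurable (fun z : ℝ × ℝ => ENNReal.ofReal (φ (z.1 - z.2))) :=
    (ENNReal.measurable_ofReal.comp (φ_cont.comp (continuous_fst.sub continuous_snd)).measurable)
  have hnn : ∀ y, 0 ≤ Qm ν y := fun y => integral_nonneg fun s => (φ_pos _).le
  have hQm_eq : ∀ y, ENNReal.ofReal (Qm ν y) = ∫⁻ s, ENNReal.ofReal (φ (y - s)) ∂ν := by
    intro y
    refine ofReal_integral_eq_lintegral_ofReal ?_ (Filter.Eventually.of_forall fun s => (φ_pos _).le)
    refine Integrable.mono' (integrable_const ((Real.sqrt (2 * π))⁻¹) (μ := ν)) ?_ ?_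
    · exact (φ_cont.comp (continuous_const.sub continuous_id)).aestronglyMeasurable
    · filter_upwards with s
      rw [Real.norm_eq_abs, abs_of_pos (φ_pos _)]
      exact φ_le _
  have hswap : ∫⁻ y, (∫⁻ s, ENNReal.ofReal (φ (y - s)) ∂ν) = 1 := by
    rw [lintegral_lintegral_swap hφm.aemeasurable]
    have hinner : ∀ s : ℝ, ∫⁻ y, ENNReal.ofReal (φ (y - s)) = 1 := by
      intro s
      rw [← ofReal_integral_eq_lintegral_ofReal (integrable_φ_shift s)
        (Filter.Eventually.of_forall fun y => (φ_pos _).le), integral_φ_shift s]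
      simp
    simp_rw [hinner]
    simp
  have hlin : ∫⁻ y, ENNReal.ofReal (Qm ν y) = 1 := by
    simp_rw [hQm_eq]; exact hswap
  have hmeas : AEStronglyMeasurable (Qm ν) volume := (Qm_stronglyMeasurable ν).aestronglyMeasurable
  have hint : Integrable (Qm ν) volume := by
    refine ⟨hmeas, ?_⟩
    rw [hasFiniteIntegral_iff_norm]
    have : ∀ y, ENNReal.ofReal ‖Qm ν y‖ = ENNReal.ofReal (Qm ν y) := by
      intro y; rw [Real.norm_eq_abs, abs_of_nonneg (hnn y)]
    simp_rw [this, hlin]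
    norm_num
  refine ⟨hint, ?_⟩
  rw [integral_eq_lintegral_of_nonneg_ae (Filter.Eventually.of_forall hnn) hmeas]
  rw [hlin]
  simp

/-- Capacity bound. -/
noncomputable def Bcap (a : ℝ) : ℝ := Real.sqrt 2 * (3 * a ^ 2 + 8)

lemma Bcap_nonneg (a : ℝ) : 0 ≤ Bcap a := by unfold Bcap; positivity

/-- Gibbs' inequality: the relative entropy integrand integrates to something nonnegative. -/
lemma gibbs (c : ℝ) (q : ℝ → ℝ) (hq_pos : ∀ y, 0 < q y) (hq_int : Integrable q volume)
    (hq_one : ∫ y, q y ≤ 1) :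
    0 ≤ ∫ y, φ (y - c) * Real.log (φ (y - c) / q y) := by
  set L := fun y => φ (y - c) * Real.log (φ (y - c) / q y) with hL
  by_cases hLi : Integrable L volume
  · have hlb : ∀ y, φ (y - c) - q y ≤ L y := by
      intro y
      have hf := φ_pos (y - c)
      have hq := hq_pos y
      have hlog : Real.log (q y / φ (y - c)) ≤ q y / φ (y - c) - 1 :=
        Real.log_le_sub_one_of_pos (by positivity)
      have h1 : Real.log (φ (y - c) / q y) = - Real.log (q y / φ (y - c)) := by
        rw [← Real.log_inv]; congr 1; field_simp
      rw [hL]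
      simp only
      rw [h1]
      have h2 : φ (y - c) * (q y / φ (y - c) - 1) = q y - φ (y - c) := by field_simp
      nlinarith [mul_le_mul_of_nonneg_left hlog hf.le]
    have hsub : Integrable (fun y => φ (y - c) - q y) volume :=
      (integrable_φ_shift c).sub hq_int
    have := integral_mono hsub hLi hlb
    rw [integral_sub (integrable_φ_shift c) hq_int, integral_φ_shift c] at this
    linarith
  · rw [integral_undef hLi]

/-- Upper bound on the relative-entropy integral, plus integrability. -/
lemma upper (a c : ℝ) (hc : |c| ≤ a) (q : ℝ → ℝ) (hq_meas : StronglyMeasurable q)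
    (hq_lb : ∀ y, (Real.sqrt (2 * π))⁻¹ * Real.exp (-a ^ 2) * Real.exp (-y ^ 2) ≤ q y)
    (hq_int : Integrable q volume) :
    Integrable (fun y => φ (y - c) * Real.log (φ (y - c) / q y)) volume ∧
      ∫ y, φ (y - c) * Real.log (φ (y - c) / q y) ≤ Bcap a := by
  have hc2 : c ^ 2 ≤ a ^ 2 := by
    have := abs_nonneg c
    nlinarith [sq_abs c]
  have hq_pos : ∀ y, 0 < q y := fun y => lt_of_lt_of_le (by positivity) (hq_lb y)
  set L := fun y => φ (y - c) * Real.log (φ (y - c) / q y) with hLdef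
  set u := fun y : ℝ => φ (y - c) * (a ^ 2 + y ^ 2) with hudef
  set g := fun y : ℝ => (Real.sqrt (2 * π))⁻¹ * (3 * a ^ 2 + 8) * Real.exp (-(y - c) ^ 2 / 4)
    with hgdef
  have hLu : ∀ y, L y ≤ u y := by
    intro y
    have hf := φ_pos (y - c)
    have hlog : Real.log (φ (y - c) / q y) ≤ a ^ 2 + y ^ 2 := by
      rw [Real.log_div hf.ne' (hq_pos y).ne']
      have h1 : Real.log (φ (y - c)) =
          Real.log ((Real.sqrt (2 * π))⁻¹) + (-(y - c) ^ 2 / 2) := by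
        unfold φ
        rw [Real.log_mul (by positivity) (Real.exp_ne_zero _), Real.log_exp]
      have h2 : Real.log ((Real.sqrt (2 * π))⁻¹) + (-a ^ 2) + (-y ^ 2) ≤ Real.log (q y) := by
        have := Real.log_le_log (by positivity) (hq_lb y)
        rwa [Real.log_mul (by positivity) (Real.exp_ne_zero _),
          Real.log_mul (by positivity) (Real.exp_ne_zero _), Real.log_exp, Real.log_exp] at this
      rw [h1]
      nlinarith [sq_nonneg (y - c)]
    exact mul_le_mul_of_nonneg_left hlog hf.le
  have hug : ∀ y, u y ≤ g y := by
    intro y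
    have h1 : a ^ 2 + y ^ 2 ≤ 3 * a ^ 2 + 2 * (y - c) ^ 2 := by nlinarith [sq_nonneg (y - 2 * c), hc2]
    have h2 : 3 * a ^ 2 + 2 * (y - c) ^ 2 ≤ (3 * a ^ 2 + 8) * Real.exp ((y - c) ^ 2 / 4) := by
      have he1 : (1:ℝ) ≤ Real.exp ((y - c) ^ 2 / 4) := by
        rw [show (1:ℝ) = Real.exp 0 by simp]
        exact Real.exp_le_exp.2 (by positivity)
      have he2 : (y - c) ^ 2 / 4 ≤ Real.exp ((y - c) ^ 2 / 4) := by
        nlinarith [Real.add_one_le_exp ((y - c) ^ 2 / 4)]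
      nlinarith [sq_nonneg a, sq_nonneg (y - c)]
    have h3 : φ (y - c) * (3 * a ^ 2 + 2 * (y - c) ^ 2) ≤ g y := by
      unfold φ
      rw [hgdef]
      simp only
      rw [mul_assoc, mul_comm (Real.exp (-(y - c) ^ 2 / 2))]
      rw [mul_assoc ((Real.sqrt (2 * π))⁻¹)]
      refine mul_le_mul_of_nonneg_left ?_ (by positivity)
      have : Real.exp (-(y - c) ^ 2 / 4) =
          Real.exp ((y - c) ^ 2 / 4) * Real.exp (-(y - c) ^ 2 / 2) := by
        rw [← Real.exp_add]; ring_nf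
      rw [this, ← mul_assoc]
      exact mul_le_mul_of_nonneg_right h2 (Real.exp_pos _).le
    calc u y ≤ φ (y - c) * (3 * a ^ 2 + 2 * (y - c) ^ 2) :=
          mul_le_mul_of_nonneg_left h1 (φ_pos _).le
      _ ≤ g y := h3
  have hg_int : Integrable g volume := by
    have h4 : Integrable (fun y : ℝ => Real.exp (-(4:ℝ)⁻¹ * y ^ 2)) volume :=
      integrable_exp_neg_mul_sq (by norm_num)
    have h5 : Integrable (fun y : ℝ => Real.exp (-(4:ℝ)⁻¹ * (y - c) ^ 2)) volume :=
      h4.comp_sub_right c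
    have h6 : Integrable (fun y : ℝ => ((Real.sqrt (2 * π))⁻¹ * (3 * a ^ 2 + 8)) *
        Real.exp (-(4:ℝ)⁻¹ * (y - c) ^ 2)) volume := h5.const_mul _
    refine h6.congr (Filter.Eventually.of_forall fun y => ?_)
    rw [hgdef]; ring_nf
  have hg_val : ∫ y, g y = Bcap a := by
    rw [hgdef]
    simp only
    rw [integral_const_mul]
    have : ∀ y : ℝ, Real.exp (-(y - c) ^ 2 / 4) = Real.exp (-(4:ℝ)⁻¹ * (y - c) ^ 2) := by
      intro y; ring_nf
    simp_rw [this]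
    rw [integral_sub_right_eq_self (fun y : ℝ => Real.exp (-(4:ℝ)⁻¹ * y ^ 2)) c]
    rw [integral_gaussian]
    unfold Bcap
    rw [show π / (4:ℝ)⁻¹ = 4 * π by ring]
    have hπ := Real.pi_pos
    rw [show (4:ℝ) * π = 2 * (2 * π) by ring, Real.sqrt_mul (by norm_num) (2 * π)]
    have h2π : Real.sqrt (2 * π) ≠ 0 := sqrt2pi_pos.ne'
    field_simp
  have hL_meas : AEStronglyMeasurable L volume := by
    have hm : Measurable L := by
      apply Measurable.mul
      · exact (φ_cont.comp (continuous_id.sub continuous_const)).measurable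
      · exact Measurable.log
          (((φ_cont.comp (continuous_id.sub continuous_const)).measurable).div
            hq_meas.measurable)
    exact hm.aestronglyMeasurable
  have hLlb : ∀ y, φ (y - c) - q y ≤ L y := by
    intro y
    have hf := φ_pos (y - c)
    have hq := hq_pos y
    have hlog : Real.log (q y / φ (y - c)) ≤ q y / φ (y - c) - 1 :=
      Real.log_le_sub_one_of_pos (by positivity)
    have h1 : Real.log (φ (y - c) / q y) = - Real.log (q y / φ (y - c)) := by
      rw [← Real.log_inv]; congr 1; field_simp
    have h2 : φ (y - c) * (q y / φ (y - c) - 1) = q y - φ (y - c) := by field_simp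
    rw [hLdef]
    simp only
    rw [h1]
    nlinarith [mul_le_mul_of_nonneg_left hlog hf.le]
  have habs : ∀ y, |L y| ≤ g y + q y := by
    intro y
    have h1 : L y ≤ g y := (hLu y).trans (hug y)
    have h2 : φ (y - c) - q y ≤ L y := hLlb y
    have h3 : 0 ≤ g y := by rw [hgdef]; positivity
    have h4 := (φ_pos (y - c)).le
    have h5 := (hq_pos y).le
    rw [abs_le]
    constructor <;> nlinarith
  have hL_int : Integrable L volume := by
    refine Integrable.mono' (hg_int.add hq_int) hL_meas ?_
    filter_upwards with y
    rw [Real.norm_eq_abs]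
    exact habs y
  refine ⟨hL_int, ?_⟩
  calc ∫ y, L y ≤ ∫ y, g y :=
        integral_mono hL_int hg_int (fun y => (hLu y).trans (hug y))
    _ = Bcap a := hg_val

/-- Inner relative-entropy integral for the scalar Gaussian channel. -/
noncomputable def Ih (ν : Measure ℝ) (c : ℝ) : ℝ :=
  ∫ y, φ (y - c) * Real.log (φ (y - c) / Qm ν y)

lemma MI_eq_integral_Ih (ν : Measure ℝ) :
    MI ν (fun y t => φ (y - t)) = ∫ c, Ih ν c ∂ν := rfl

lemma Ih_nonneg (ν : Measure ℝ) [IsProbabilityMeasure ν] {a : ℝ}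
    (hsupp : ν (Icc (-a) a) = 1) (c : ℝ) : 0 ≤ Ih ν c := by
  obtain ⟨hint, hone⟩ := Qm_integrable ν
  exact gibbs c (Qm ν) (fun y => Qm_pos ν hsupp y) hint (le_of_eq hone)

lemma Ih_le (ν : Measure ℝ) [IsProbabilityMeasure ν] {a c : ℝ}
    (hsupp : ν (Icc (-a) a) = 1) (hc : |c| ≤ a) : Ih ν c ≤ Bcap a := by
  obtain ⟨hint, _⟩ := Qm_integrable ν
  exact (upper a c hc (Qm ν) (Qm_stronglyMeasurable ν) (fun y => Qm_lb ν hsupp y) hint).2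

lemma Ih_integrable (ν : Measure ℝ) [IsProbabilityMeasure ν] {a c : ℝ}
    (hsupp : ν (Icc (-a) a) = 1) (hc : |c| ≤ a) :
    Integrable (fun y => φ (y - c) * Real.log (φ (y - c) / Qm ν y)) volume := by
  obtain ⟨hint, _⟩ := Qm_integrable ν
  exact (upper a c hc (Qm ν) (Qm_stronglyMeasurable ν) (fun y => Qm_lb ν hsupp y) hint).1

lemma Ih_stronglyMeasurable (ν : Measure ℝ) [IsProbabilityMeasure ν] :
    StronglyMeasurable (Ih ν) := by
  have hm : Measurable (fun z : ℝ × ℝ => φ (z.2 - z.1) * Real.log (φ (z.2 - z.1) / Qm ν z.2)) := by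
    have h1 : Measurable (fun z : ℝ × ℝ => φ (z.2 - z.1)) :=
      (φ_cont.comp (continuous_snd.sub continuous_fst)).measurable
    exact h1.mul (Measurable.log (h1.div ((Qm_stronglyMeasurable ν).measurable.comp
      measurable_snd)))
  exact hm.stronglyMeasurable.integral_prod_right'

/-- MI of the scalar channel is in `[0, Bcap a]` for measures supported on `[-a,a]`. -/
lemma MI_phi_nonneg (ν : Measure ℝ) [IsProbabilityMeasure ν] {a : ℝ}
    (hsupp : ν (Icc (-a) a) = 1) : 0 ≤ MI ν (fun y t => φ (y - t)) := by
  rw [MI_eq_integral_Ih]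
  exact integral_nonneg (Ih_nonneg ν hsupp)

lemma MI_phi_le (ν : Measure ℝ) [IsProbabilityMeasure ν] {a : ℝ}
    (hsupp : ν (Icc (-a) a) = 1) : MI ν (fun y t => φ (y - t)) ≤ Bcap a := by
  rw [MI_eq_integral_Ih]
  by_cases hI : Integrable (Ih ν) ν
  · have h1 : ∫ c, Ih ν c ∂ν ≤ ∫ _, Bcap a ∂ν := by
      refine integral_mono_ae hI (integrable_const _) ?_
      filter_upwards [ae_mem_of_eq_one ν measurableSet_Icc hsupp] with c hcmem
      have hc : |c| ≤ a := abs_le.2 ⟨hcmem.1, hcmem.2⟩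
      exact Ih_le ν hsupp hc
    have h2 : ∫ _ : ℝ, Bcap a ∂ν = Bcap a := by simp
    linarith
  · rw [integral_undef hI]; exact Bcap_nonneg a

lemma CSm_set_def (a : ℝ) : CSm a = sSup {x : ℝ | ∃ F : Measure ℝ, IsProbabilityMeasure F ∧
    F (Icc (-a) a) = 1 ∧ x = MI F (fun y t => φ (y - t))} := rfl

lemma CSm_set_le (a : ℝ) : ∀ x ∈ {x : ℝ | ∃ F : Measure ℝ, IsProbabilityMeasure F ∧
    F (Icc (-a) a) = 1 ∧ x = MI F (fun y t => φ (y - t))}, x ≤ Bcap a := by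
  rintro x ⟨F, hFp, hFs, rfl⟩
  exact MI_phi_le F hFs

lemma CSm_bddAbove (a : ℝ) : BddAbove {x : ℝ | ∃ F : Measure ℝ, IsProbabilityMeasure F ∧
    F (Icc (-a) a) = 1 ∧ x = MI F (fun y t => φ (y - t))} :=
  ⟨Bcap a, fun x hx => CSm_set_le a x hx⟩

lemma CSm_set_nonempty {a : ℝ} (h0 : 0 ≤ a) :
    {x : ℝ | ∃ F : Measure ℝ, IsProbabilityMeasure F ∧
      F (Icc (-a) a) = 1 ∧ x = MI F (fun y t => φ (y - t))}.Nonempty := by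
  refine ⟨MI (Measure.dirac 0) (fun y t => φ (y - t)), Measure.dirac 0, inferInstance, ?_, rfl⟩
  rw [Measure.dirac_apply_of_mem]
  exact ⟨neg_nonpos.2 h0, h0⟩

lemma le_CSm {a : ℝ} (ν : Measure ℝ) [IsProbabilityMeasure ν]
    (hsupp : ν (Icc (-a) a) = 1) : MI ν (fun y t => φ (y - t)) ≤ CSm a :=
  le_csSup (CSm_bddAbove a) ⟨ν, inferInstance, hsupp, rfl⟩

section Middle

variable {M : ℕ} (a : Fin M → ℝ) (p : Fin M → ℝ)

lemma constraint_measurable : MeasurableSet {t : Fin M → ℝ | ∀ i, |t i| ≤ a i} := by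
  have : {t : Fin M → ℝ | ∀ i, |t i| ≤ a i} =
      ⋂ i, (fun t : Fin M → ℝ => t i) ⁻¹' (Icc (-(a i)) (a i)) := by
    ext t
    simp only [mem_iInter, mem_preimage, mem_Icc, mem_setOf_eq]
    exact forall_congr' fun i => abs_le
  rw [this]
  exact MeasurableSet.iInter fun i => (measurable_pi_apply i) measurableSet_Icc

lemma Fi_supp (F : Measure (Fin M → ℝ)) [IsProbabilityMeasure F]
    (hFs : F {t | ∀ i, |t i| ≤ a i} = 1) (i : Fin M) :
    (F.map (fun t => t i)) (Icc (-(a i)) (a i)) = 1 := by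
  rw [Measure.map_apply (measurable_pi_apply i) measurableSet_Icc]
  refine le_antisymm prob_le_one ?_
  rw [← hFs]
  refine measure_mono fun t ht => ?_
  simp only [mem_preimage, mem_Icc]
  exact abs_le.1 (ht i)

lemma integrable_φ_eval (F : Measure (Fin M → ℝ)) [IsProbabilityMeasure F] (y : ℝ) (i : Fin M) :
    Integrable (fun s : Fin M → ℝ => φ (y - s i)) F := by
  refine Integrable.mono' (integrable_const ((Real.sqrt (2 * π))⁻¹)) ?_ ?_
  · exact ((φ_cont.comp (continuous_const.sub (continuous_apply i)))).aestronglyMeasurable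
  · filter_upwards with s
    rw [Real.norm_eq_abs, abs_of_pos (φ_pos _)]
    exact φ_le _

lemma Q_eq (F : Measure (Fin M → ℝ)) [IsProbabilityMeasure F] (y : ℝ) :
    (∫ s, ∑ i, p i * φ (y - s i) ∂F) = ∑ i, p i * Qm (F.map (fun t => t i)) y := by
  rw [integral_finset_sum]
  · refine Finset.sum_congr rfl fun i _ => ?_
    rw [integral_const_mul]
    congr 1
    rw [Qm, integral_map (measurable_pi_apply i).aemeasurable
      ((φ_cont.comp (continuous_const.sub continuous_id)).aestronglyMeasurable)]
  · intro i _
    exact (integrable_φ_eval F y i).const_mul _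

end Middle

section Main

lemma logsum_pointwise {M : ℕ} (p : Fin M → ℝ) (hp : ∀ i, 0 ≤ p i)
    (f q : Fin M → ℝ) (hf : ∀ i, 0 < f i) (hq : ∀ i, 0 < q i) :
    (∑ i, p i * f i) * Real.log ((∑ i, p i * f i) / (∑ i, p i * q i)) ≤
      ∑ i, p i * (f i * Real.log (f i / q i)) := by
  classical
  set s := Finset.univ.filter (fun i : Fin M => 0 < p i) with hs
  have hzero : ∀ i : Fin M, i ∈ Finset.univ → ¬ (0 < p i) → p i = 0 := by
    intro i _ hip
    exact le_antisymm (not_lt.1 hip) (hp i)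
  have hfa : ∑ i, p i * f i = ∑ i ∈ s, p i * f i := by
    rw [hs]
    refine (Finset.sum_filter_of_ne ?_).symm
    intro i hi hne
    by_contra hip
    exact hne (by rw [hzero i hi hip, zero_mul])
  have hfb : ∑ i, p i * q i = ∑ i ∈ s, p i * q i := by
    rw [hs]
    refine (Finset.sum_filter_of_ne ?_).symm
    intro i hi hne
    by_contra hip
    exact hne (by rw [hzero i hi hip, zero_mul])
  have hfc : ∑ i, p i * (f i * Real.log (f i / q i)) =
      ∑ i ∈ s, p i * (f i * Real.log (f i / q i)) := by
    rw [hs]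
    refine (Finset.sum_filter_of_ne ?_).symm
    intro i hi hne
    by_contra hip
    exact hne (by rw [hzero i hi hip, zero_mul])
  rw [hfa, hfb, hfc]
  have key := log_sum_ineq s (fun i => p i * f i) (fun i => p i * q i)
    (fun i hi => mul_pos ((Finset.mem_filter.1 hi).2) (hf i))
    (fun i hi => mul_pos ((Finset.mem_filter.1 hi).2) (hq i))
  refine key.trans (le_of_eq (Finset.sum_congr rfl fun i hi => ?_))
  have hpi : p i ≠ 0 := ((Finset.mem_filter.1 hi).2).ne'
  rw [mul_div_mul_left _ _ hpi, mul_assoc]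

lemma middle_le {M : ℕ} (a : Fin M → ℝ) (ha : ∀ i, 0 < a i)
    (p : Fin M → ℝ) (hp : ∀ i, 0 ≤ p i)
    (F : Measure (Fin M → ℝ)) [IsProbabilityMeasure F]
    (hFs : F {t | ∀ i, |t i| ≤ a i} = 1) :
    MI F (fun y t => ∑ i, p i * φ (y - t i)) ≤ ∑ i, p i * CSm (a i) := by
  classical
  set Fi := fun i => F.map (fun t : Fin M → ℝ => t i) with hFi
  haveI : ∀ i, IsProbabilityMeasure (Fi i) := fun i =>
    Measure.isProbabilityMeasure_map (measurable_pi_apply i).aemeasurable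
  have hFisupp : ∀ i, (Fi i) (Icc (-(a i)) (a i)) = 1 := fun i => Fi_supp a F hFs i
  -- inner bound
  have hinner : ∀ t : Fin M → ℝ, (∀ i, |t i| ≤ a i) →
      (∫ y, (∑ i, p i * φ (y - t i)) *
          Real.log ((∑ i, p i * φ (y - t i)) / ∫ s, (∑ i, p i * φ (y - s i)) ∂F)) ≤
        ∑ i, p i * Ih (Fi i) (t i) := by
    intro t ht
    have hRint : Integrable (fun y => ∑ i, p i *
        (φ (y - t i) * Real.log (φ (y - t i) / Qm (Fi i) y))) volume := by
      refine integrable_finset_sum _ fun i _ => ?_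
      exact (Ih_integrable (Fi i) (hFisupp i) (ht i)).const_mul _
    have hRval : (∫ y, ∑ i, p i * (φ (y - t i) * Real.log (φ (y - t i) / Qm (Fi i) y))) =
        ∑ i, p i * Ih (Fi i) (t i) := by
      rw [integral_finset_sum _ fun i _ => (Ih_integrable (Fi i) (hFisupp i) (ht i)).const_mul _]
      exact Finset.sum_congr rfl fun i _ => integral_const_mul _ _
    have hptw : ∀ y, (∑ i, p i * φ (y - t i)) *
        Real.log ((∑ i, p i * φ (y - t i)) / ∫ s, (∑ i, p i * φ (y - s i)) ∂F) ≤
        ∑ i, p i * (φ (y - t i) * Real.log (φ (y - t i) / Qm (Fi i) y)) := by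
      intro y
      rw [Q_eq p F y]
      exact logsum_pointwise p hp (fun i => φ (y - t i)) (fun i => Qm (Fi i) y)
        (fun i => φ_pos _) (fun i => Qm_pos (Fi i) (hFisupp i) y)
    by_cases hLi : Integrable (fun y => (∑ i, p i * φ (y - t i)) *
        Real.log ((∑ i, p i * φ (y - t i)) / ∫ s, (∑ i, p i * φ (y - s i)) ∂F)) volume
    · rw [← hRval]
      exact integral_mono hLi hRint hptw
    · rw [integral_undef hLi, ← hRval]
      rw [hRval]
      refine Finset.sum_nonneg fun i _ => ?_
      exact mul_nonneg (hp i) (Ih_nonneg (Fi i) (hFisupp i) (t i))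
  -- outer
  have hIh_comp_int : ∀ i, Integrable (fun t : Fin M → ℝ => Ih (Fi i) (t i)) F := by
    intro i
    refine Integrable.mono' (integrable_const (Bcap (a i))) ?_ ?_
    · exact ((Ih_stronglyMeasurable (Fi i)).measurable.comp
        (measurable_pi_apply i)).aestronglyMeasurable
    · filter_upwards [ae_mem_of_eq_one F (constraint_measurable a) hFs] with t htm
      rw [Real.norm_eq_abs, abs_of_nonneg (Ih_nonneg (Fi i) (hFisupp i) (t i))]
      exact Ih_le (Fi i) (hFisupp i) (htm i)
  have hsum_int : Integrable (fun t : Fin M → ℝ => ∑ i, p i * Ih (Fi i) (t i)) F :=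
    integrable_finset_sum _ fun i _ => (hIh_comp_int i).const_mul _
  have hsum_val : (∫ t, ∑ i, p i * Ih (Fi i) (t i) ∂F) = ∑ i, p i * MI (Fi i) (fun y c => φ (y - c)) := by
    rw [integral_finset_sum _ fun i _ => (hIh_comp_int i).const_mul _]
    refine Finset.sum_congr rfl fun i _ => ?_
    rw [integral_const_mul]
    congr 1
    rw [MI_eq_integral_Ih]
    exact integral_map (measurable_pi_apply i).aemeasurable
      (Ih_stronglyMeasurable (Fi i)).aestronglyMeasurable |>.symm
  have houter : MI F (fun y t => ∑ i, p i * φ (y - t i)) ≤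
      ∑ i, p i * MI (Fi i) (fun y c => φ (y - c)) := by
    rw [MI]
    by_cases hHi : Integrable (fun t : Fin M → ℝ => ∫ y, (∑ i, p i * φ (y - t i)) *
        Real.log ((∑ i, p i * φ (y - t i)) / ∫ s, (∑ i, p i * φ (y - s i)) ∂F)) F
    · rw [← hsum_val]
      refine integral_mono_ae hHi hsum_int ?_
      filter_upwards [ae_mem_of_eq_one F (constraint_measurable a) hFs] with t htm
      exact hinner t htm
    · rw [integral_undef hHi, ← hsum_val, hsum_val]
      refine Finset.sum_nonneg fun i _ => ?_
      exact mul_nonneg (hp i) (MI_phi_nonneg (Fi i) (hFisupp i))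
  refine houter.trans (Finset.sum_le_sum fun i _ => ?_)
  exact mul_le_mul_of_nonneg_left (le_CSm (Fi i) (hFisupp i)) (hp i)

end Main

section First

lemma const_map_MI {M : ℕ} [NeZero M] (a : Fin M → ℝ) (ha : ∀ i, 0 < a i)
    (p : Fin M → ℝ) (hps : ∑ i, p i = 1)
    (F : Measure ℝ) [IsProbabilityMeasure F] :
    MI (F.map (fun t : ℝ => fun _ : Fin M => t)) (fun y t => ∑ i, p i * φ (y - t i)) =
      MI F (fun y t => φ (y - t)) := by
  classical
  set cm : ℝ → (Fin M → ℝ) := fun t => fun _ : Fin M => t with hcm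
  have hcm_meas : Measurable cm := measurable_pi_lambda _ fun _ => measurable_id
  set F' := F.map cm with hF'
  haveI : IsProbabilityMeasure F' := Measure.isProbabilityMeasure_map hcm_meas.aemeasurable
  have hGsum : ∀ y t : ℝ, (∑ i, p i * φ (y - t)) = φ (y - t) := by
    intro y t
    rw [← Finset.sum_mul, hps, one_mul]
  have hQ' : ∀ y : ℝ, (∫ s, ∑ i, p i * φ (y - s i) ∂F') = Qm F y := by
    intro y
    rw [hF', integral_map hcm_meas.aemeasurable]
    · simp only [hcm]
      simp_rw [hGsum y]
      rfl
    · refine Continuous.aestronglyMeasurable ?_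
      exact continuous_finset_sum _ fun i _ =>
        continuous_const.mul (φ_cont.comp (continuous_const.sub (continuous_apply i)))
  rw [MI]
  simp_rw [hQ']
  have hmeas : AEStronglyMeasurable
      (fun t : Fin M → ℝ => ∫ y, (∑ i, p i * φ (y - t i)) *
        Real.log ((∑ i, p i * φ (y - t i)) / Qm F y)) F' := by
    have hj : Measurable (fun z : (Fin M → ℝ) × ℝ => (∑ i, p i * φ (z.2 - z.1 i)) *
        Real.log ((∑ i, p i * φ (z.2 - z.1 i)) / Qm F z.2)) := by
      have hG : Continuous (fun z : (Fin M → ℝ) × ℝ => ∑ i, p i * φ (z.2 - z.1 i)) :=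
        continuous_finset_sum _ fun i _ => continuous_const.mul
          (φ_cont.comp (continuous_snd.sub ((continuous_apply i).comp continuous_fst)))
      exact hG.measurable.mul (Measurable.log (hG.measurable.div
        ((Qm_stronglyMeasurable F).measurable.comp measurable_snd)))
    exact hj.stronglyMeasurable.integral_prod_right'.aestronglyMeasurable
  rw [hF', integral_map hcm_meas.aemeasurable hmeas]
  simp only [hcm]
  simp_rw [hGsum]
  rfl

end First

/-- The no-side-information capacity is at most the causal-transmitter-side-information
capacity `C_Sh`, which is at most the full-side-information capacity:
`C_Sm(min aᵢ) ≤ C_Sh ≤ Σᵢ pᵢ C_Sm(aᵢ)`. -/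
theorem capacity_sandwich (M : ℕ) [NeZero M] (a : Fin M → ℝ) (ha : ∀ i, 0 < a i)
    (p : Fin M → ℝ) (hp : ∀ i, 0 ≤ p i) (hps : ∑ i, p i = 1) :
    CSm (⨅ i, a i) ≤
      sSup {x : ℝ | ∃ F : Measure (Fin M → ℝ), IsProbabilityMeasure F ∧
          F {t | ∀ i, |t i| ≤ a i} = 1 ∧
          x = MI F (fun y t => ∑ i, p i * φ (y - t i))} ∧
    sSup {x : ℝ | ∃ F : Measure (Fin M → ℝ), IsProbabilityMeasure F ∧
          F {t | ∀ i, |t i| ≤ a i} = 1 ∧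
          x = MI F (fun y t => ∑ i, p i * φ (y - t i))} ≤
      ∑ i, p i * CSm (a i) := by
  classical
  haveI : Nonempty (Fin M) := Fin.pos_iff_nonempty.1 (NeZero.pos M)
  set m := ⨅ i, a i with hm
  have hm_le : ∀ i, m ≤ a i := fun i => ciInf_le (Finite.bddBelow_range _) i
  have hm0 : 0 ≤ m := le_ciInf fun i => (ha i).le
  set T := {x : ℝ | ∃ F : Measure (Fin M → ℝ), IsProbabilityMeasure F ∧
      F {t | ∀ i, |t i| ≤ a i} = 1 ∧
      x = MI F (fun y t => ∑ i, p i * φ (y - t i))} with hT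
  have hT_le : ∀ x ∈ T, x ≤ ∑ i, p i * CSm (a i) := by
    rintro x ⟨F, hFp, hFs, rfl⟩
    exact middle_le a ha p hp F hFs
  have hT_bdd : BddAbove T := ⟨∑ i, p i * CSm (a i), fun x hx => hT_le x hx⟩
  constructor
  · -- first inequality
    refine csSup_le_csSup hT_bdd (CSm_set_nonempty hm0) ?_
    rintro x ⟨F, hFp, hFs, rfl⟩
    have hc : Measurable (fun t : ℝ => fun _ : Fin M => t) :=
      measurable_pi_lambda _ fun _ => measurable_id
    refine ⟨F.map (fun t : ℝ => fun _ : Fin M => t), ?_, ?_, ?_⟩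
    · exact Measure.isProbabilityMeasure_map hc.aemeasurable
    · rw [Measure.map_apply hc (constraint_measurable a)]
      refine le_antisymm prob_le_one ?_
      rw [← hFs]
      refine measure_mono fun t ht => ?_
      simp only [mem_preimage, mem_setOf_eq]
      intro i
      exact (abs_le.2 ⟨ht.1, ht.2⟩).trans (hm_le i)
    · exact (const_map_MI a ha p hps F).symm
  · exact csSup_le ⟨MI ((Measure.dirac (fun _ : Fin M => (0:ℝ))))
      (fun y t => ∑ i, p i * φ (y - t i)), Measure.dirac _, inferInstance, by
        rw [Measure.dirac_apply_of_mem]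
        intro i
        simp only [abs_zero]
        exact (ha i).le, rfl⟩ hT_le
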